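/- arXiv:0805.3654 — 3 statements merged into one kernel-verified Lean document; each statement's English description precedes it below -/
import Mathlib

section
/- For every t ∈ ℝ, the image measure ρ_t of the N-dimensional Lebesgue measure m under the map T_t : x ↦ Φ(x,−t) is absolutely continuous with respect to m, and its Radon–Nikodym derivative is dρ_t/dm(x) = exp(∫₀ᵗ div F(Φ(x,s)) ds) for m-almost every x ∈ ℝ^N. -/
open MeasureTheory
open scoped NNReal ENNReal

noncomputable section

/-- The divergence of a vector field on `ℝ^N`. -/
def diverg {N : ℕ} (F : EuclideanSpace ℝ (Fin N) → EuclideanSpace ℝ (Fin N))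
    (x : EuclideanSpace ℝ (Fin N)) : ℝ :=
  ∑ i, (fderiv ℝ F x (EuclideanSpace.single i 1) : Fin N → ℝ) i

open Set Metric Real Filter Matrix intervalIntegral
open scoped Topology

abbrev Euc (N : ℕ) := EuclideanSpace ℝ (Fin N)

lemma coord_le_norm {N : ℕ} (v : Euc N) (i : Fin N) : |v i| ≤ ‖v‖ := by
  rw [EuclideanSpace.norm_eq]
  rw [← Real.sqrt_sq_eq_abs (v i)]
  apply Real.sqrt_le_sqrt
  have : v i ^ 2 = ‖v i‖ ^ 2 := by simp [Real.norm_eq_abs, sq_abs]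
  rw [this]
  exact Finset.single_le_sum (f := fun j => ‖v j‖ ^ 2) (fun j _ => by positivity)
    (Finset.mem_univ i)



/-- determinant as a continuous multilinear map in the rows -/
def detCML (N : ℕ) : ContinuousMultilinearMap ℝ (fun _ : Fin N => (Fin N → ℝ)) ℝ :=
  MultilinearMap.mkContinuous (Matrix.detRowAlternating (n := Fin N) (R := ℝ)).toMultilinearMap
    (Nat.factorial N : ℝ) (by
      intro m
      have : Matrix.detRowAlternating (R := ℝ) (Matrix.of m) =
          (Matrix.of m).det := rfl
      show ‖(Matrix.of m).det‖ ≤ _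
      rw [Matrix.det_apply]
      calc ‖∑ σ : Equiv.Perm (Fin N), Equiv.Perm.sign σ • ∏ i, Matrix.of m (σ i) i‖
          ≤ ∑ σ : Equiv.Perm (Fin N), ‖Equiv.Perm.sign σ • ∏ i, Matrix.of m (σ i) i‖ :=
            norm_sum_le _ _
        _ ≤ ∑ _σ : Equiv.Perm (Fin N), ∏ i, ‖m i‖ := by
            apply Finset.sum_le_sum
            intro σ _
            have hsgn : ‖Equiv.Perm.sign σ • ∏ i, Matrix.of m (σ i) i‖ =
                ‖∏ i, m (σ i) i‖ := by
              rcases Int.units_eq_one_or (Equiv.Perm.sign σ) with h | h <;>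
                simp [h, Matrix.of_apply]
            rw [hsgn]
            calc ‖∏ i, m (σ i) i‖ = ∏ i, ‖m (σ i) i‖ := by
                  rw [Real.norm_eq_abs, Finset.abs_prod]
                  simp [Real.norm_eq_abs]
              _ ≤ ∏ i, ‖m (σ i)‖ := by
                  apply Finset.prod_le_prod (fun i _ => norm_nonneg _)
                  intro i _
                  exact norm_le_pi_norm (m (σ i)) i
              _ = ∏ i, ‖m i‖ := Equiv.prod_comp σ (fun k => ‖m k‖)
        _ = (Nat.factorial N : ℝ) * ∏ i, ‖m i‖ := by
            rw [Finset.sum_const, Finset.card_univ, Fintype.card_perm]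
            simp [Fintype.card_fin, nsmul_eq_mul]
      )

@[simp] lemma detCML_apply {N : ℕ} (m : Fin N → Fin N → ℝ) :
    detCML N m = (Matrix.of m).det := by
  rw [detCML]
  rfl

/-- Jacobi-type formula: derivative of the determinant of a curve of matrices. -/
theorem hasDerivWithinAt_det {N : ℕ} {M M' : ℝ → Matrix (Fin N) (Fin N) ℝ}
    {s₀ : Set ℝ} {u : ℝ}
    (h : ∀ i j, HasDerivWithinAt (fun t => M t i j) (M' u i j) s₀ u) :
    HasDerivWithinAt (fun t => (M t).det)
      (∑ i, ((M u).updateRow i (M' u i)).det) s₀ u := by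
  have hrow : ∀ i, HasFDerivWithinAt (fun t => M t i)
      ((1 : ℝ →L[ℝ] ℝ).smulRight (M' u i)) s₀ u := by
    intro i
    have : HasDerivWithinAt (fun t => M t i) (M' u i) s₀ u :=
      hasDerivWithinAt_pi.2 fun j => h i j
    exact this.hasFDerivWithinAt
  have hcomp := HasFDerivWithinAt.multilinear_comp (detCML N) (g := fun i t => M t i)
    (g' := fun i => (1 : ℝ →L[ℝ] ℝ).smulRight (M' u i)) (s := s₀) (x := u) hrow
  have := hcomp.hasDerivWithinAt
  simp only [ContinuousLinearMap.coe_sum', Finset.sum_apply,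
    ContinuousLinearMap.coe_comp', Function.comp_apply,
    ContinuousLinearMap.smulRight_apply, ContinuousLinearMap.one_apply, one_smul,
    ContinuousMultilinearMap.toContinuousLinearMap_apply] at this
  convert this using 1
  all_goals first | rfl | skip

/-- trace identity -/
theorem sum_det_updateRow_mul {N : ℕ} (B M : Matrix (Fin N) (Fin N) ℝ) :
    ∑ i, (M.updateRow i ((B * M) i)).det = Matrix.trace B * M.det := by
  have key : ∀ i, (M.updateRow i ((B * M) i)).det = B i i * M.det := by
    intro i
    have hrow : (B * M) i = ∑ k, B i k • M k := by
      funext j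
      simp [Matrix.mul_apply, Finset.sum_apply]
    rw [hrow, Matrix.det_updateRow_sum]
    simp [smul_eq_mul]
  rw [Finset.sum_congr rfl (fun i _ => key i), ← Finset.sum_mul, Matrix.trace]
  rfl

structure FlowSys (N : ℕ) : Type where
  F : Euc N → Euc N
  κ : ℝ≥0
  hκ : 0 < κ
  lip : LipschitzWith κ F
  cd : ContDiff ℝ 1 F
  Φ : Euc N → ℝ → Euc N
  init : ∀ x, Φ x 0 = x
  derivΦ : ∀ x t, HasDerivAt (Φ x) (F (Φ x t)) t

namespace FlowSys

variable {N : ℕ} (S : FlowSys N)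

/-- time reversal -/
def rev : FlowSys N where
  F := fun y => -S.F y
  κ := S.κ
  hκ := S.hκ
  lip := by simpa [Pi.neg_def] using S.lip.neg
  cd := S.cd.neg
  Φ := fun x s => S.Φ x (-s)
  init := fun x => by simpa using S.init x
  derivΦ := fun x t => by
    have h := (S.derivΦ x (-t)).scomp t (hasDerivAt_neg t)
    simpa [neg_smul, one_smul, Function.comp_def] using h

theorem uniq {K : ℝ≥0} {V : Euc N → Euc N} (hV : LipschitzWith K V) (f g : ℝ → Euc N)
    (hf : ∀ s, HasDerivAt f (V (f s)) s) (hg : ∀ s, HasDerivAt g (V (g s)) s)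
    (h0 : f 0 = g 0) (t : ℝ) : f t = g t := by
  have key : ∀ (V : Euc N → Euc N), LipschitzWith K V → ∀ (f g : ℝ → Euc N),
      (∀ s, HasDerivAt f (V (f s)) s) →
      (∀ s, HasDerivAt g (V (g s)) s) → f 0 = g 0 → ∀ t, 0 ≤ t → f t = g t := by
    intro V hV f g hf hg h0 t ht
    have := ODE_solution_unique (v := fun _ => V) (K := K) (f := f) (g := g) (a := 0) (b := t)
      (fun _ => hV)
      (fun s _ => (hf s).continuousAt.continuousWithinAt)
      (fun s _ => (hf s).hasDerivWithinAt)
      (fun s _ => (hg s).continuousAt.continuousWithinAt)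
      (fun s _ => (hg s).hasDerivWithinAt) h0
    exact this ⟨ht, le_rfl⟩
  rcases le_total 0 t with ht | ht
  · exact key V hV f g hf hg h0 t ht
  · have hV' : LipschitzWith K (fun y => -V y) := by simpa [Pi.neg_def] using hV.neg
    have hf' : ∀ s, HasDerivAt (fun s => f (-s)) ((fun y => -V y) (f (-s))) s := fun s => by
      have h := (hf (-s)).scomp s (hasDerivAt_neg s)
      simpa [neg_smul, one_smul, Function.comp_def] using h
    have hg' : ∀ s, HasDerivAt (fun s => g (-s)) ((fun y => -V y) (g (-s))) s := fun s => by
      have h := (hg (-s)).scomp s (hasDerivAt_neg s)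
      simpa [neg_smul, one_smul, Function.comp_def] using h
    have := key _ hV' (fun s => f (-s)) (fun s => g (-s)) hf' hg' (by simpa using h0) (-t)
      (by linarith)
    simpa using this

theorem flow_add (x : Euc N) (a b : ℝ) : S.Φ x (a + b) = S.Φ (S.Φ x a) b := by
  have := uniq S.lip (fun s => S.Φ x (a + s)) (fun s => S.Φ (S.Φ x a) s)
    (fun s => by
      have h := (S.derivΦ x (a + s)).scomp s ((hasDerivAt_id s).const_add a)
      simpa [Function.comp_def] using h)
    (fun s => S.derivΦ _ s)
    (by simpa using (S.init (S.Φ x a)).symm) b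
  exact this

theorem dist_flow_le_nonneg (x y : Euc N) {s : ℝ} (hs : 0 ≤ s) :
    dist (S.Φ x s) (S.Φ y s) ≤ dist x y * Real.exp (S.κ * s) := by
  have := dist_le_of_trajectories_ODE (v := fun _ => S.F) (K := S.κ)
    (f := S.Φ x) (g := S.Φ y) (a := 0) (b := s) (δ := dist x y)
    (fun _ => S.lip)
    (fun u _ => (S.derivΦ x u).continuousAt.continuousWithinAt)
    (fun u _ => (S.derivΦ x u).hasDerivWithinAt)
    (fun u _ => (S.derivΦ y u).continuousAt.continuousWithinAt)
    (fun u _ => (S.derivΦ y u).hasDerivWithinAt)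
    (by rw [S.init, S.init])
  simpa using this s ⟨hs, le_rfl⟩

theorem dist_flow_le (x y : Euc N) (s : ℝ) :
    dist (S.Φ x s) (S.Φ y s) ≤ dist x y * Real.exp (S.κ * |s|) := by
  rcases le_total 0 s with hs | hs
  · rw [abs_of_nonneg hs]; exact S.dist_flow_le_nonneg x y hs
  · have h := S.rev.dist_flow_le_nonneg x y (s := -s) (by linarith)
    have e1 : S.rev.Φ x (-s) = S.Φ x s := by simp [rev]
    have e2 : S.rev.Φ y (-s) = S.Φ y s := by simp [rev]
    rw [e1, e2] at h
    simpa [abs_of_nonpos hs, rev] using h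

theorem contPhi : Continuous fun p : Euc N × ℝ => S.Φ p.1 p.2 := by
  rw [continuous_iff_continuousAt]
  rintro ⟨x₀, t₀⟩
  have hx₀ : Continuous (S.Φ x₀) :=
    continuous_iff_continuousAt.2 fun s => (S.derivΦ x₀ s).continuousAt
  rw [ContinuousAt, tendsto_iff_dist_tendsto_zero]
  apply squeeze_zero (g := fun p : Euc N × ℝ =>
      dist p.1 x₀ * Real.exp (S.κ * |p.2|) + dist (S.Φ x₀ p.2) (S.Φ x₀ t₀))
    (fun _ => dist_nonneg)
  · intro p
    calc dist (S.Φ p.1 p.2) (S.Φ x₀ t₀)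
        ≤ dist (S.Φ p.1 p.2) (S.Φ x₀ p.2) + dist (S.Φ x₀ p.2) (S.Φ x₀ t₀) := dist_triangle _ _ _
      _ ≤ dist p.1 x₀ * Real.exp (S.κ * |p.2|) + dist (S.Φ x₀ p.2) (S.Φ x₀ t₀) := by
          gcongr; exact S.dist_flow_le p.1 x₀ p.2
  · have : Continuous fun p : Euc N × ℝ =>
        dist p.1 x₀ * Real.exp (S.κ * |p.2|) + dist (S.Φ x₀ p.2) (S.Φ x₀ t₀) := by
      fun_prop
    have h0 : dist (x₀:Euc N) x₀ * Real.exp (S.κ * |t₀|) + dist (S.Φ x₀ t₀) (S.Φ x₀ t₀) = 0 := by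
      simp
    exact h0 ▸ this.tendsto (x₀, t₀)


/-! ### The derivative of `F` -/

def A (y : Euc N) : Euc N →L[ℝ] Euc N := fderiv ℝ S.F y

theorem hasFDerivF (y : Euc N) : HasFDerivAt S.F (S.A y) y :=
  (S.cd.differentiable one_ne_zero y).hasFDerivAt

theorem contA : Continuous S.A := S.cd.continuous_fderiv one_ne_zero

theorem normA (y : Euc N) : ‖S.A y‖ ≤ S.κ := norm_fderiv_le_of_lipschitz ℝ S.lip

theorem diverg_eq (y : Euc N) :
    diverg S.F y = ∑ i, (S.A y (EuclideanSpace.single i 1)) i := rfl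

theorem contPhi_x (x : Euc N) : Continuous (S.Φ x) :=
  continuous_iff_continuousAt.2 fun s => (S.derivΦ x s).continuousAt

theorem cont_diverg : Continuous (diverg S.F) := by
  have h : Continuous fun y => ∑ i, (S.A y (EuclideanSpace.single i 1)) i := by
    apply continuous_finset_sum
    intro i _
    exact ((EuclideanSpace.proj (𝕜 := ℝ) i).continuous).comp
      ((ContinuousLinearMap.apply ℝ (Euc N) (EuclideanSpace.single i 1)).continuous.comp S.contA)
  have e : diverg S.F = fun y => ∑ i, (S.A y (EuclideanSpace.single i 1)) i :=
    funext fun y => S.diverg_eq y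
  rw [e]; exact h

theorem abs_diverg_le (y : Euc N) : |diverg S.F y| ≤ N * S.κ := by
  rw [S.diverg_eq]
  calc |∑ i, (S.A y (EuclideanSpace.single i 1)) i|
      ≤ ∑ i : Fin N, |(S.A y (EuclideanSpace.single i 1)) i| := Finset.abs_sum_le_sum_abs _ _
    _ ≤ ∑ _i : Fin N, (S.κ : ℝ) := by
        apply Finset.sum_le_sum
        intro i _
        calc |(S.A y (EuclideanSpace.single i 1)) i|
            ≤ ‖S.A y (EuclideanSpace.single i 1)‖ := coord_le_norm _ i
          _ ≤ ‖S.A y‖ * ‖(EuclideanSpace.single i 1 : Euc N)‖ :=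
              (S.A y).le_opNorm _
          _ ≤ S.κ := by
              rw [EuclideanSpace.norm_single, norm_one, mul_one]
              exact S.normA y
    _ = N * S.κ := by simp [mul_comm]

/-! ### The variational equation -/

def τ : ℝ := 1 / (2 * S.κ)

theorem κ_pos : (0:ℝ) < S.κ := NNReal.coe_pos.2 S.hκ

theorem τ_pos : 0 < S.τ := by
  have := S.κ_pos
  rw [τ]
  positivity

theorem exists_var (x : Euc N) :
    ∃ W : ℝ → (Euc N →L[ℝ] Euc N), W 0 = 1 ∧
      ∀ s ∈ Icc (-S.τ) S.τ,
        HasDerivWithinAt W ((S.A (S.Φ x s)).comp (W s)) (Icc (-S.τ) S.τ) s := by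
  have hκR : (0:ℝ) < S.κ := S.κ_pos
  have hpl : IsPicardLindelof (fun s (W : Euc N →L[ℝ] Euc N) => (S.A (S.Φ x s)).comp W)
      (tmin := -S.τ) (tmax := S.τ) ⟨0, by constructor <;> linarith [S.τ_pos]⟩ 1 1 0
      (2 * S.κ) S.κ := by
    constructor
    · intro s _
      apply LipschitzOnWith.mono (LipschitzWith.lipschitzOnWith ?_) (subset_univ _)
      apply LipschitzWith.of_dist_le_mul
      intro W W'
      rw [dist_eq_norm, dist_eq_norm, ← ContinuousLinearMap.comp_sub]
      calc ‖(S.A (S.Φ x s)).comp (W - W')‖ ≤ ‖S.A (S.Φ x s)‖ * ‖W - W'‖ :=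
            ContinuousLinearMap.opNorm_comp_le _ _
        _ ≤ S.κ * ‖W - W'‖ := by
            gcongr
            exact S.normA _
    · intro W _
      apply Continuous.continuousOn
      exact Continuous.clm_comp (S.contA.comp (S.contPhi_x x)) continuous_const
    · intro s _ W hW
      have hWn : ‖W‖ ≤ 2 := by
        have := mem_closedBall_iff_norm.1 hW
        calc ‖W‖ ≤ ‖W - 1‖ + ‖(1 : Euc N →L[ℝ] Euc N)‖ := by
              have h := norm_add_le (W - 1) 1
              rwa [sub_add_cancel] at h
          _ ≤ 1 + 1 := by
              have h1 : ‖W - 1‖ ≤ 1 := by simpa using this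
              exact add_le_add h1 ContinuousLinearMap.norm_id_le
          _ = 2 := by norm_num
      calc ‖(S.A (S.Φ x s)).comp W‖ ≤ ‖S.A (S.Φ x s)‖ * ‖W‖ :=
            ContinuousLinearMap.opNorm_comp_le _ _
        _ ≤ S.κ * 2 := by
            apply mul_le_mul (S.normA _) hWn (norm_nonneg _)
            exact S.κ.2
        _ = 2 * S.κ := by ring
    · have : (S.τ - 0) ⊔ (0 - -S.τ) = S.τ := by
        rw [sub_zero, zero_sub, neg_neg, max_self]
      simp only [NNReal.coe_mul, NNReal.coe_ofNat, NNReal.coe_one, NNReal.coe_zero]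
      rw [this, τ]
      field_simp
      norm_num
  obtain ⟨f, hf0, hf⟩ := hpl.exists_eq_forall_mem_Icc_hasDerivWithinAt₀
  exact ⟨f, hf0, hf⟩

/-! ### Small-time differentiability of the flow in the initial condition -/

theorem hasFDerivAt_flow_small (x₀ : Euc N) {s : ℝ} (hs : s ∈ Icc 0 S.τ)
    (W : ℝ → Euc N →L[ℝ] Euc N) (hW0 : W 0 = 1)
    (hW : ∀ u ∈ Icc (-S.τ) S.τ,
      HasDerivWithinAt W ((S.A (S.Φ x₀ u)).comp (W u)) (Icc (-S.τ) S.τ) u) :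
    HasFDerivAt (fun y => S.Φ y s) (W s) x₀ := by
  obtain ⟨hs0, hsτ⟩ := hs
  have hτ := S.τ_pos
  have hκR := S.κ_pos
  set κR : ℝ := (S.κ : ℝ) with hκRdef
  set C₁ : ℝ := Real.exp (κR * S.τ) with hC₁
  have hC₁pos : 0 < C₁ := Real.exp_pos _
  have hC₁one : 1 ≤ C₁ := Real.one_le_exp (by positivity)
  set D : ℝ := C₁ * Real.exp (κR * S.τ) / κR with hD
  have hDpos : 0 < D := by positivity
  -- the compact tube around the trajectory
  set K : Set (Euc N) := S.Φ x₀ '' Icc (-S.τ) S.τ with hK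
  have hKcomp : IsCompact K := isCompact_Icc.image (S.contPhi_x x₀)
  set K' : Set (Euc N) := Metric.cthickening 1 K with hK'
  have hK'comp : IsCompact K' := hKcomp.cthickening
  have hAuc : UniformContinuousOn S.A K' :=
    hK'comp.uniformContinuousOn_of_continuous S.contA.continuousOn
  rw [hasFDerivAt_iff_isLittleO_nhds_zero, Asymptotics.isLittleO_iff]
  intro c hc
  set ε₀ : ℝ := c / D with hε₀
  have hε₀pos : 0 < ε₀ := by positivity
  -- uniform continuity of A near the trajectory
  obtain ⟨δ', hδ'pos, hδ'⟩ := Metric.uniformContinuousOn_iff.1 hAuc ε₀ hε₀pos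
  set δ : ℝ := min (δ' / 2) 1 with hδdef
  have hδpos : 0 < δ := by
    apply lt_min (by linarith) one_pos
  have hδ1 : δ ≤ 1 := min_le_right _ _
  have hδδ' : δ < δ' := lt_of_le_of_lt (min_le_left _ _) (by linarith)
  -- the Taylor-type remainder estimate near the trajectory
  have hrem : ∀ a ∈ K, ∀ b, ‖b - a‖ ≤ δ →
      ‖S.F b - S.F a - S.A a (b - a)‖ ≤ ε₀ * ‖b - a‖ := by
    intro a ha b hb
    have haK' : a ∈ K' := self_subset_cthickening K ha
    have hball : closedBall a δ ⊆ K' := by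
      intro y hy
      exact mem_cthickening_of_dist_le y a 1 K ha (le_trans (mem_closedBall.1 hy) hδ1)
    have hder : ∀ y ∈ closedBall a δ,
        HasFDerivWithinAt (fun y => S.F y - S.A a y) (S.A y - S.A a) (closedBall a δ) y :=
      fun y _ => ((S.hasFDerivF y).sub ((S.A a).hasFDerivAt)).hasFDerivWithinAt
    have hbnd : ∀ y ∈ closedBall a δ, ‖S.A y - S.A a‖ ≤ ε₀ := by
      intro y hy
      have hyK' : y ∈ K' := hball hy
      have := hδ' y hyK' a haK' (lt_of_le_of_lt (mem_closedBall.1 hy) hδδ')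
      rw [dist_eq_norm] at this
      exact this.le
    have hconv : Convex ℝ (closedBall a δ) := convex_closedBall a δ
    have hmem_a : a ∈ closedBall a δ := mem_closedBall_self hδpos.le
    have hmem_b : b ∈ closedBall a δ := by
      rw [mem_closedBall, dist_eq_norm]; exact hb
    have := hconv.norm_image_sub_le_of_norm_hasFDerivWithin_le hder hbnd hmem_a hmem_b
    calc ‖S.F b - S.F a - S.A a (b - a)‖
        = ‖(S.F b - S.A a b) - (S.F a - S.A a a)‖ := by
          congr 1
          rw [map_sub]
          abel
      _ ≤ ε₀ * ‖b - a‖ := this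
  -- now the main estimate
  filter_upwards [Metric.closedBall_mem_nhds (0 : Euc N) (show 0 < δ / C₁ by positivity)]
    with h hh
  have hhnorm : ‖h‖ ≤ δ / C₁ := by
    rw [mem_closedBall, dist_zero_right] at hh
    exact hh
  have hflowdist : ∀ u ∈ Icc (-S.τ) S.τ, ‖S.Φ (x₀ + h) u - S.Φ x₀ u‖ ≤ C₁ * ‖h‖ := by
    intro u hu
    have := S.dist_flow_le (x₀ + h) x₀ u
    rw [dist_eq_norm] at this
    have habs : |u| ≤ S.τ := abs_le.2 ⟨hu.1, hu.2⟩
    calc ‖S.Φ (x₀ + h) u - S.Φ x₀ u‖ ≤ dist (x₀ + h) x₀ * Real.exp (κR * |u|) := this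
      _ ≤ ‖h‖ * C₁ := by
          rw [dist_eq_norm, add_sub_cancel_left]
          gcongr
          · exact Real.exp_le_exp.2 (by
              have : κR * |u| ≤ κR * S.τ := by gcongr
              exact this)
      _ = C₁ * ‖h‖ := mul_comm _ _
  have hflowδ : ∀ u ∈ Icc (-S.τ) S.τ, ‖S.Φ (x₀ + h) u - S.Φ x₀ u‖ ≤ δ := by
    intro u hu
    calc ‖S.Φ (x₀ + h) u - S.Φ x₀ u‖ ≤ C₁ * ‖h‖ := hflowdist u hu
      _ ≤ C₁ * (δ / C₁) := by gcongr
      _ = δ := by field_simp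
  -- the error function
  set z : ℝ → Euc N := fun u => S.Φ (x₀ + h) u - S.Φ x₀ u - W u h with hz
  have hIccsub : Icc (0:ℝ) s ⊆ Icc (-S.τ) S.τ := by
    apply Icc_subset_Icc (by linarith) hsτ
  have hWcont : ContinuousOn W (Icc (-S.τ) S.τ) :=
    fun u hu => (hW u hu).continuousWithinAt
  have hzcont : ContinuousOn z (Icc 0 s) := by
    apply ContinuousOn.sub
    apply ContinuousOn.sub
    · exact (S.contPhi_x (x₀ + h)).continuousOn
    · exact (S.contPhi_x x₀).continuousOn
    · exact ((hWcont.mono hIccsub).clm_apply continuousOn_const)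
  set z' : ℝ → Euc N := fun u =>
    S.F (S.Φ (x₀ + h) u) - S.F (S.Φ x₀ u) - S.A (S.Φ x₀ u) (W u h) with hz'
  have hzderiv : ∀ u ∈ Ico 0 s, HasDerivWithinAt z (z' u) (Ici u) u := by
    intro u hu
    have huIcc : u ∈ Icc (-S.τ) S.τ := hIccsub ⟨hu.1, hu.2.le⟩
    have hmem : Icc (-S.τ) S.τ ∈ nhdsWithin u (Ici u) :=
      Icc_mem_nhdsGE_of_mem ⟨huIcc.1, lt_of_lt_of_le hu.2 hsτ⟩
    have hWh : HasDerivWithinAt (fun u => W u h) (S.A (S.Φ x₀ u) (W u h)) (Ici u) u := by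
      have := (hW u huIcc).clm_apply (hasDerivWithinAt_const _ _ h)
      simp only [add_zero, ContinuousLinearMap.comp_apply, map_zero] at this
      exact (this.mono_of_mem_nhdsWithin hmem)
    exact (((S.derivΦ (x₀ + h) u).hasDerivWithinAt.sub
      (S.derivΦ x₀ u).hasDerivWithinAt).sub hWh)
  have hzbound : ∀ u ∈ Ico 0 s, ‖z' u‖ ≤ κR * ‖z u‖ + ε₀ * C₁ * ‖h‖ := by
    intro u hu
    have huIcc : u ∈ Icc (-S.τ) S.τ := hIccsub ⟨hu.1, hu.2.le⟩
    have haK : S.Φ x₀ u ∈ K := mem_image_of_mem _ huIcc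
    have hba : ‖S.Φ (x₀ + h) u - S.Φ x₀ u‖ ≤ δ := hflowδ u huIcc
    have hz'eq : z' u = (S.F (S.Φ (x₀ + h) u) - S.F (S.Φ x₀ u)
        - S.A (S.Φ x₀ u) (S.Φ (x₀ + h) u - S.Φ x₀ u)) + S.A (S.Φ x₀ u) (z u) := by
      simp only [hz', hz, map_sub]
      abel
    rw [hz'eq]
    calc ‖(S.F (S.Φ (x₀ + h) u) - S.F (S.Φ x₀ u)
          - S.A (S.Φ x₀ u) (S.Φ (x₀ + h) u - S.Φ x₀ u)) + S.A (S.Φ x₀ u) (z u)‖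
        ≤ ‖S.F (S.Φ (x₀ + h) u) - S.F (S.Φ x₀ u)
          - S.A (S.Φ x₀ u) (S.Φ (x₀ + h) u - S.Φ x₀ u)‖ + ‖S.A (S.Φ x₀ u) (z u)‖ :=
          norm_add_le _ _
      _ ≤ ε₀ * ‖S.Φ (x₀ + h) u - S.Φ x₀ u‖ + ‖S.A (S.Φ x₀ u)‖ * ‖z u‖ := by
          gcongr
          · exact hrem _ haK _ hba
          · exact (S.A _).le_opNorm _
      _ ≤ ε₀ * (C₁ * ‖h‖) + κR * ‖z u‖ := by
          gcongr
          · exact hflowdist u huIcc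
          · exact S.normA _
      _ = κR * ‖z u‖ + ε₀ * C₁ * ‖h‖ := by ring
  have hz0 : ‖z 0‖ ≤ 0 := by
    rw [hz]
    simp [S.init, hW0]
  have := norm_le_gronwallBound_of_norm_deriv_right_le (δ := 0) (K := κR)
    (ε := ε₀ * C₁ * ‖h‖) (a := 0) (b := s) hzcont hzderiv hz0 hzbound s ⟨hs0, le_rfl⟩
  have hgb : gronwallBound 0 κR (ε₀ * C₁ * ‖h‖) (s - 0) ≤ c * ‖h‖ := by
    rw [gronwallBound_of_K_ne_0 (ne_of_gt hκR)]
    simp only [zero_mul, zero_add, sub_zero]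
    calc ε₀ * C₁ * ‖h‖ / κR * (Real.exp (κR * s) - 1)
        ≤ ε₀ * C₁ * ‖h‖ / κR * Real.exp (κR * S.τ) := by
          apply mul_le_mul_of_nonneg_left _ (by positivity)
          have : Real.exp (κR * s) ≤ Real.exp (κR * S.τ) := Real.exp_le_exp.2 (by gcongr)
          linarith
      _ = ε₀ * D * ‖h‖ := by rw [hD]; ring
      _ = c * ‖h‖ := by
          rw [hε₀]
          field_simp
  calc ‖S.Φ (x₀ + h) s - S.Φ x₀ s - W s h‖ = ‖z s‖ := rfl
    _ ≤ gronwallBound 0 κR (ε₀ * C₁ * ‖h‖) (s - 0) := this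
    _ ≤ c * ‖h‖ := hgb

/-! ### The determinant along the variational equation -/

theorem coord_eq_sum (L : Euc N →L[ℝ] Euc N) (v : Euc N) (i : Fin N) :
    (L v) i = ∑ k, v k * (L (PiLp.basisFun 2 ℝ (Fin N) k)) i := by
  have hv : v = ∑ k, v k • (PiLp.basisFun 2 ℝ (Fin N)) k := by
    have := (PiLp.basisFun 2 ℝ (Fin N)).sum_repr v
    simp only [PiLp.basisFun_repr] at this
    exact this.symm
  conv_lhs => rw [hv]
  rw [map_sum]
  calc (∑ k, L (v k • (PiLp.basisFun 2 ℝ (Fin N)) k)) i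
      = EuclideanSpace.proj (𝕜 := ℝ) i (∑ k, L (v k • (PiLp.basisFun 2 ℝ (Fin N)) k)) := rfl
    _ = ∑ k, EuclideanSpace.proj (𝕜 := ℝ) i (L (v k • (PiLp.basisFun 2 ℝ (Fin N)) k)) :=
        map_sum _ _ _
    _ = ∑ k, v k * (L (PiLp.basisFun 2 ℝ (Fin N) k)) i := by
        apply Finset.sum_congr rfl
        intro k _
        rw [ContinuousLinearMap.map_smul]
        rfl

theorem det_clm (W : Euc N →L[ℝ] Euc N) :
    W.det = (Matrix.of fun i j => (W ((PiLp.basisFun 2 ℝ (Fin N)) j)) i).det := by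
  rw [ContinuousLinearMap.det, ← LinearMap.det_toMatrix (PiLp.basisFun 2 ℝ (Fin N))]
  congr 1
  ext i j
  rw [LinearMap.toMatrix_apply, PiLp.basisFun_repr]
  rfl

theorem trace_eq_diverg (y : Euc N) :
    Matrix.trace (Matrix.of fun i j => (S.A y ((PiLp.basisFun 2 ℝ (Fin N)) j)) i)
      = diverg S.F y := by
  rw [Matrix.trace, S.diverg_eq]
  apply Finset.sum_congr rfl
  intro i _
  simp only [Matrix.diag_apply, Matrix.of_apply]
  rw [PiLp.basisFun_apply]

theorem theta_cont (x : Euc N) : Continuous fun u => diverg S.F (S.Φ x u) :=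
  S.cont_diverg.comp (S.contPhi_x x)

theorem det_var_eq (x : Euc N) (W : ℝ → Euc N →L[ℝ] Euc N) (hW0 : W 0 = 1)
    (hW : ∀ u ∈ Icc (-S.τ) S.τ,
      HasDerivWithinAt W ((S.A (S.Φ x u)).comp (W u)) (Icc (-S.τ) S.τ) u)
    {s : ℝ} (hs : s ∈ Icc 0 S.τ) :
    (W s).det = Real.exp (∫ u in (0:ℝ)..s, diverg S.F (S.Φ x u)) := by
  obtain ⟨hs0, hsτ⟩ := hs
  have hτ := S.τ_pos
  set θ : ℝ → ℝ := fun u => diverg S.F (S.Φ x u) with hθ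
  have θcont : Continuous θ := S.theta_cont x
  have hIccsub : Icc (0:ℝ) s ⊆ Icc (-S.τ) S.τ := Icc_subset_Icc (by linarith) hsτ
  set e : Fin N → Euc N := fun k => (PiLp.basisFun 2 ℝ (Fin N)) k with he
  set M : ℝ → Matrix (Fin N) (Fin N) ℝ := fun u => Matrix.of fun i j => (W u (e j)) i with hM
  set d : ℝ → ℝ := fun u => (W u).det with hd
  -- the derivative of d
  have hdderiv : ∀ u ∈ Icc (-S.τ) S.τ,
      HasDerivWithinAt d (θ u * d u) (Icc (-S.τ) S.τ) u := by
    intro u hu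
    set B : Matrix (Fin N) (Fin N) ℝ :=
      Matrix.of fun i j => (S.A (S.Φ x u) (e j)) i with hB
    have hentry : ∀ i j, HasDerivWithinAt (fun v => M v i j)
        ((B * M u) i j) (Icc (-S.τ) S.τ) u := by
      intro i j
      have h1 : HasDerivWithinAt (fun v => W v (e j))
          (((S.A (S.Φ x u)).comp (W u)) (e j)) (Icc (-S.τ) S.τ) u := by
        have := (hW u hu).clm_apply (hasDerivWithinAt_const _ _ (e j))
        simpa using this
      have h2 : HasDerivWithinAt (fun v => (W v (e j)) i)
          ((((S.A (S.Φ x u)).comp (W u)) (e j)) i) (Icc (-S.τ) S.τ) u := by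
        have := (hasDerivWithinAt_const u (Icc (-S.τ) S.τ)
          (EuclideanSpace.proj (𝕜 := ℝ) i : Euc N →L[ℝ] ℝ)).clm_apply h1
        simpa using this
      have heq : (((S.A (S.Φ x u)).comp (W u)) (e j)) i = (B * M u) i j := by
        rw [ContinuousLinearMap.comp_apply]
        rw [coord_eq_sum (S.A (S.Φ x u)) (W u (e j)) i]
        rw [Matrix.mul_apply]
        apply Finset.sum_congr rfl
        intro k _
        simp only [hB, hM, he, Matrix.of_apply]
        ring
      rw [← heq]
      exact h2
    have hdet := hasDerivWithinAt_det (M := M) (M' := fun _ => B * M u)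
      (s₀ := Icc (-S.τ) S.τ) (u := u) hentry
    have htr : ∑ i, ((M u).updateRow i ((B * M u) i)).det = θ u * d u := by
      rw [sum_det_updateRow_mul B (M u)]
      have h1 : Matrix.trace B = θ u := by
        simp only [hB, he]
        rw [S.trace_eq_diverg]
      have h2 : (M u).det = d u := by
        simp only [hM, he, hd]
        exact (det_clm (W u)).symm
      rw [h1, h2]
    rw [htr] at hdet
    have hfun : (fun t => (M t).det) = d := by
      funext w
      simp only [hd, hM, he]
      exact (det_clm (W w)).symm
    rw [hfun] at hdet
    exact hdet
  -- uniqueness of the scalar linear ODE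
  set g : ℝ → ℝ := fun u => Real.exp (∫ v in (0:ℝ)..u, θ v) with hg
  have hgderiv : ∀ u, HasDerivAt g (θ u * g u) u := by
    intro u
    have hI : HasDerivAt (fun w => ∫ v in (0:ℝ)..w, θ v) (θ u) u :=
      intervalIntegral.integral_hasDerivAt_right (θcont.intervalIntegrable _ _)
        θcont.stronglyMeasurable.stronglyMeasurableAtFilter θcont.continuousAt
    have := (Real.hasDerivAt_exp (∫ v in (0:ℝ)..u, θ v)).comp u hI
    simpa [hg, mul_comm, Function.comp_def] using this
  set L : ℝ≥0 := (N : ℝ≥0) * S.κ with hL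
  have hLip : ∀ t : ℝ, LipschitzWith L (fun y : ℝ => θ t * y) := by
    intro t
    apply LipschitzWith.of_dist_le_mul
    intro y y'
    rw [Real.dist_eq, Real.dist_eq, ← mul_sub, abs_mul]
    apply mul_le_mul_of_nonneg_right _ (abs_nonneg _)
    calc |θ t| ≤ N * S.κ := S.abs_diverg_le _
      _ = (L : ℝ) := by rw [hL]; push_cast; ring
  have huniq := ODE_solution_unique (v := fun t y => θ t * y) (K := L) (f := d) (g := g)
    (a := 0) (b := s) hLip
    (fun u hu => ((hdderiv u (hIccsub hu)).continuousWithinAt).mono hIccsub)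
    (fun u hu => ((hdderiv u (hIccsub ⟨hu.1, hu.2.le⟩)).mono_of_mem_nhdsWithin
      (Icc_mem_nhdsGE_of_mem ⟨(hIccsub ⟨hu.1, hu.2.le⟩).1, lt_of_lt_of_le hu.2 hsτ⟩)))
    (fun u _ => (hgderiv u).continuousAt.continuousWithinAt)
    (fun u _ => (hgderiv u).hasDerivWithinAt)
    (by
      show (W 0).det = Real.exp (∫ v in (0:ℝ)..(0:ℝ), θ v)
      rw [hW0]
      simp [ContinuousLinearMap.det, ContinuousLinearMap.one_def, ContinuousLinearMap.coe_id])
  have := huniq ⟨hs0, le_rfl⟩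
  rw [hd] at this
  exact this

/-! ### The global property -/

def Good (t : ℝ) : Prop := ∀ x : Euc N, ∃ W : Euc N →L[ℝ] Euc N,
  HasFDerivAt (fun y => S.Φ y t) W x ∧
    W.det = Real.exp (∫ u in (0:ℝ)..t, diverg S.F (S.Φ x u))

theorem good_small {t : ℝ} (ht : t ∈ Icc 0 S.τ) : S.Good t := by
  intro x
  obtain ⟨W, hW0, hW⟩ := S.exists_var x
  exact ⟨W t, S.hasFDerivAt_flow_small x ht W hW0 hW, S.det_var_eq x W hW0 hW ht⟩

theorem diverg_rev (y : Euc N) : diverg S.rev.F y = -diverg S.F y := by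
  have h : fderiv ℝ S.rev.F y = -fderiv ℝ S.F y := by
    have : S.rev.F = fun z => -S.F z := rfl
    rw [this, fderiv_fun_neg]
  show (∑ i, (fderiv ℝ S.rev.F y (EuclideanSpace.single i 1)) i) = _
  rw [h]
  rw [S.diverg_eq]
  rw [← Finset.sum_neg_distrib]
  apply Finset.sum_congr rfl
  intro i _
  rfl

theorem good_of_rev {r : ℝ} (h : S.rev.Good r) : S.Good (-r) := by
  intro x
  obtain ⟨W, hW, hdet⟩ := h x
  refine ⟨W, hW, ?_⟩
  rw [hdet]
  congr 1
  have h1 : ∀ u, diverg S.rev.F (S.rev.Φ x u) = -diverg S.F (S.Φ x (-u)) := by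
    intro u
    rw [S.diverg_rev]
    rfl
  calc ∫ u in (0:ℝ)..r, diverg S.rev.F (S.rev.Φ x u)
      = ∫ u in (0:ℝ)..r, -diverg S.F (S.Φ x (-u)) := by
        apply intervalIntegral.integral_congr
        intro u _
        exact h1 u
    _ = -∫ u in (0:ℝ)..r, diverg S.F (S.Φ x (-u)) := by
        rw [intervalIntegral.integral_neg]
    _ = ∫ u in (0:ℝ)..(-r), diverg S.F (S.Φ x u) := by
        rw [intervalIntegral.integral_comp_neg (fun u => diverg S.F (S.Φ x u)),
          intervalIntegral.integral_symm (-r) 0]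
        norm_num

theorem Good.comp {a b : ℝ} (ha : S.Good a) (hb : S.Good b) : S.Good (a + b) := by
  intro x
  obtain ⟨Wa, hWa, hdeta⟩ := ha x
  obtain ⟨Wb, hWb, hdetb⟩ := hb (S.Φ x a)
  refine ⟨Wb.comp Wa, ?_, ?_⟩
  · have hfun : (fun y => S.Φ y (a + b)) = (fun y => S.Φ y b) ∘ (fun y => S.Φ y a) :=
      funext fun y => S.flow_add y a b
    rw [hfun]
    exact hWb.comp x hWa
  · have hmul : (Wb.comp Wa).det = Wb.det * Wa.det := by
      rw [ContinuousLinearMap.det, ContinuousLinearMap.det, ContinuousLinearMap.det,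
        ContinuousLinearMap.toLinearMap_comp, LinearMap.det_comp]
    rw [hmul, hdeta, hdetb, ← Real.exp_add]
    congr 1
    have hshift : ∫ u in (0:ℝ)..b, diverg S.F (S.Φ (S.Φ x a) u)
        = ∫ u in a..(a+b), diverg S.F (S.Φ x u) := by
      have h1 : ∫ u in (0:ℝ)..b, diverg S.F (S.Φ (S.Φ x a) u)
          = ∫ u in (0:ℝ)..b, diverg S.F (S.Φ x (a + u)) := by
        apply intervalIntegral.integral_congr
        intro u _
        exact congrArg (diverg S.F) (S.flow_add x a u).symm
      rw [h1, intervalIntegral.integral_comp_add_left (fun u => diverg S.F (S.Φ x u)) a,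
        add_zero]
    rw [hshift, add_comm (∫ u in a..(a+b), _) _]
    apply intervalIntegral.integral_add_adjacent_intervals
    · exact (S.theta_cont x).intervalIntegrable _ _
    · exact (S.theta_cont x).intervalIntegrable _ _

theorem good_base {t : ℝ} (ht : |t| ≤ S.τ) : S.Good t := by
  rcases le_total 0 t with h0 | h0
  · exact S.good_small ⟨h0, (abs_of_nonneg h0) ▸ ht⟩
  · have hrev : S.rev.Good (-t) := by
      apply S.rev.good_small
      constructor
      · linarith
      · show -t ≤ S.rev.τ
        have : S.rev.τ = S.τ := rfl
        rw [this]
        calc -t = |t| := by rw [abs_of_nonpos h0]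
          _ ≤ S.τ := ht
    have := S.good_of_rev hrev
    simpa using this

theorem good_all (t : ℝ) : S.Good t := by
  have hτ := S.τ_pos
  have key : ∀ n : ℕ, ∀ t : ℝ, |t| ≤ (n + 1) * S.τ → S.Good t := by
    intro n
    induction n with
    | zero => intro t ht; exact S.good_base (by simpa using ht)
    | succ n ih =>
      intro t ht
      by_cases hsmall : |t| ≤ (n + 1) * S.τ
      · exact ih t hsmall
      push_neg at hsmall
      have hτt : S.τ ≤ |t| := by
        calc S.τ = 1 * S.τ := (one_mul _).symm
          _ ≤ (n + 1) * S.τ := by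
              apply mul_le_mul_of_nonneg_right _ hτ.le
              push_cast; linarith
          _ ≤ |t| := hsmall.le
      rcases le_total 0 t with h0 | h0
      · have habs : |t| = t := abs_of_nonneg h0
        have h1 : S.Good (t - S.τ) := by
          apply ih
          rw [abs_of_nonneg (by rw [habs] at hτt; linarith)]
          push_cast at ht ⊢
          rw [habs] at ht
          linarith
        have h2 : S.Good S.τ := S.good_base (by rw [abs_of_nonneg hτ.le])
        have := h1.comp (S := S) h2
        simpa using this
      · have habs : |t| = -t := abs_of_nonpos h0
        have h1 : S.Good (t + S.τ) := by
          apply ih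
          rw [abs_of_nonpos (by rw [habs] at hτt; linarith)]
          push_cast at ht ⊢
          rw [habs] at ht
          linarith
        have h2 : S.Good (-S.τ) := S.good_base (by rw [abs_neg, abs_of_nonneg hτ.le])
        have := h1.comp (S := S) h2
        simpa using this
  obtain ⟨n, hn⟩ := exists_nat_ge (|t| / S.τ)
  apply key n
  calc |t| = |t| / S.τ * S.τ := by field_simp
    _ ≤ (n : ℝ) * S.τ := by gcongr
    _ ≤ (n + 1) * S.τ := by nlinarith

/-! ### The pushforward measure -/

theorem cont_G (t : ℝ) : Continuous fun y : Euc N => S.Φ y t :=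
  S.contPhi.comp (continuous_id.prodMk continuous_const)

theorem G_inv_left (t : ℝ) (y : Euc N) : S.Φ (S.Φ y t) (-t) = y := by
  rw [← S.flow_add y t (-t)]
  simp [S.init]

theorem G_inv_right (t : ℝ) (y : Euc N) : S.Φ (S.Φ y (-t)) t = y := by
  rw [← S.flow_add y (-t) t]
  simp [S.init]

theorem cont_J (t : ℝ) :
    Continuous fun x : Euc N => ∫ u in (0:ℝ)..t, diverg S.F (S.Φ x u) := by
  apply intervalIntegral.continuous_parametric_intervalIntegral_of_continuous'
  show Continuous fun p : Euc N × ℝ => diverg S.F (S.Φ p.1 p.2)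
  exact S.cont_diverg.comp S.contPhi

theorem map_eq (t : ℝ) :
    volume.map (fun x => S.Φ x (-t)) = volume.withDensity
      (fun x => ENNReal.ofReal (Real.exp (∫ u in (0:ℝ)..t, diverg S.F (S.Φ x u)))) := by
  classical
  set ρ : Euc N → ℝ≥0∞ :=
    fun x => ENNReal.ofReal (Real.exp (∫ u in (0:ℝ)..t, diverg S.F (S.Φ x u))) with hρ
  have hGinvmeas : Measurable fun y : Euc N => S.Φ y (-t) := (S.cont_G (-t)).measurable
  have hGinj : Function.Injective fun y : Euc N => S.Φ y t := by
    intro a b hab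
    have := congrArg (fun y => S.Φ y (-t)) hab
    simpa [S.G_inv_left t] using this
  choose W hW hdet using fun x => S.good_all t x
  ext s hs
  rw [Measure.map_apply hGinvmeas hs, withDensity_apply _ hs]
  have hpre : (fun y : Euc N => S.Φ y (-t)) ⁻¹' s = (fun y : Euc N => S.Φ y t) '' s := by
    ext y
    constructor
    · intro hy
      exact ⟨S.Φ y (-t), hy, S.G_inv_right t y⟩
    · rintro ⟨a, ha, rfl⟩
      simpa [S.G_inv_left t] using ha
  rw [hpre]
  rw [← lintegral_abs_det_fderiv_eq_addHaar_image volume hs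
    (fun x _ => (hW x).hasFDerivWithinAt) (hGinj.injOn)]
  apply lintegral_congr
  intro x
  rw [hdet x, abs_of_nonneg (Real.exp_pos _).le]

theorem main (t : ℝ) :
    (volume.map (fun x => S.Φ x (-t))) ≪ (volume : Measure (Euc N)) ∧
      (volume.map (fun x => S.Φ x (-t))).rnDeriv volume
        =ᵐ[volume] fun x => ENNReal.ofReal (Real.exp (∫ u in (0:ℝ)..t, diverg S.F (S.Φ x u))) := by
  have hρmeas : Measurable fun x : Euc N =>
      ENNReal.ofReal (Real.exp (∫ u in (0:ℝ)..t, diverg S.F (S.Φ x u))) :=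
    ENNReal.measurable_ofReal.comp (Real.continuous_exp.comp (S.cont_J t)).measurable
  rw [S.map_eq t]
  exact ⟨withDensity_absolutelyContinuous _ _, Measure.rnDeriv_withDensity volume hρmeas⟩

end FlowSys

/-- Let `F` be a `C¹`, globally Lipschitz vector field with bounded
divergence and let `Φ x` be the global flow of `F`.  For every `t ∈ ℝ`, the image of the
Lebesgue measure under `x ↦ Φ(x, −t)` is absolutely continuous with respect to the
Lebesgue measure, with Radon–Nikodym derivative
`x ↦ exp (∫₀ᵗ div F (Φ(x,s)) ds)` almost everywhere. -/
theorem image_measure_absolutely_continuous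
    {N : ℕ} (F : EuclideanSpace ℝ (Fin N) → EuclideanSpace ℝ (Fin N))
    (κ : ℝ≥0) (hκ : 0 < κ) (hF : LipschitzWith κ F) (hF₁ : ContDiff ℝ 1 F)
    (hdivb : ∃ C, ∀ x, |diverg F x| ≤ C)
    (Φ : EuclideanSpace ℝ (Fin N) → ℝ → EuclideanSpace ℝ (Fin N))
    (hΦ₀ : ∀ x, Φ x 0 = x)
    (hΦ : ∀ x t, HasDerivAt (Φ x) (F (Φ x t)) t)
    (t : ℝ) :
    (volume.map (fun x => Φ x (-t))) ≪ (volume : Measure (EuclideanSpace ℝ (Fin N))) ∧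
      (volume.map (fun x => Φ x (-t))).rnDeriv volume
        =ᵐ[volume] fun x => ENNReal.ofReal (Real.exp (∫ s in (0:ℝ)..t, diverg F (Φ x s))) := by
  exact FlowSys.main ⟨F, κ, hκ, hF, hF₁, Φ, hΦ₀, hΦ⟩ t
end
end

section
/- (Yorke's theorem.) Let F : ℝ^N → ℝ^N be Lipschitz with constant κ > 0 and let X : ℝ → ℝ^N be a nonconstant periodic solution of X'(t) = F(X(t)) with period T > 0. Then T ≥ 2π/κ. Equivalently, the prime period of any nonconstant periodic orbit of the flow of F is bounded below by 2π/κ. -/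
open scoped NNReal

noncomputable section


open Real Set Filter Topology

lemma first_crossing {g g' : ℝ → ℝ} {κ L δ ε : ℝ}
    (hκ : 0 ≤ κ) (hδ : 0 < δ) (hε : 0 < ε) (hL : 0 ≤ L)
    (hπ : (κ + δ) * L + ε < π)
    (hg : ∀ t, HasDerivAt g (g' t) t)
    (hb : ∀ t, |g t| ≤ 1)
    (hd : ∀ t, -(κ * Real.sqrt (1 - g t ^ 2)) ≤ g' t)
    (hg0 : g 0 = 1) : -1 < g L := by
  set c : ℝ → ℝ := fun t => Real.cos ((κ + δ) * t + ε) with hc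
  have hgc : Continuous g := continuous_iff_continuousAt.2 fun t => (hg t).continuousAt
  have hcc : Continuous c := by fun_prop
  have hεπ : ε < π := by nlinarith [mul_nonneg (by linarith : (0:ℝ) ≤ κ + δ) hL]
  have key : ∀ t ∈ Icc (0:ℝ) L, c t < g t := by
    by_contra hA
    push_neg at hA
    obtain ⟨t₁, ht₁, hgt₁⟩ := hA
    set A : Set ℝ := {t | t ∈ Icc (0:ℝ) L ∧ g t ≤ c t} with hAdef
    have hAne : A.Nonempty := ⟨t₁, ht₁, hgt₁⟩
    have hAclosed : IsClosed A := by
      have : A = Icc (0:ℝ) L ∩ {t | g t - c t ≤ 0} := by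
        ext t; simp [hAdef, sub_nonpos]
      rw [this]
      exact isClosed_Icc.inter (isClosed_le (hgc.sub hcc) continuous_const)
    have hAbdd : BddBelow A := ⟨0, fun t ht => ht.1.1⟩
    set t₀ := sInf A with ht₀def
    have ht₀A : t₀ ∈ A := hAclosed.csInf_mem hAne hAbdd
    have ht₀I : t₀ ∈ Icc (0:ℝ) L := ht₀A.1
    have hlb : ∀ s ∈ A, t₀ ≤ s := fun s hs => csInf_le hAbdd hs
    have hc0 : c 0 < 1 := by
      have : Real.cos ε < Real.cos 0 :=
        Real.cos_lt_cos_of_nonneg_of_le_pi le_rfl hεπ.le hε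
      simpa [hc] using this.trans_eq Real.cos_zero
    have ht₀pos : 0 < t₀ := by
      rcases ht₀I.1.lt_or_eq with h | h
      · exact h
      · exfalso; rw [← h] at ht₀A; have := ht₀A.2; rw [hg0] at this; linarith
    have hleft : ∀ s, 0 ≤ s → s < t₀ → c s < g s := by
      intro s h0 hst
      by_contra hcon; push_neg at hcon
      exact absurd (hlb s ⟨⟨h0, hst.le.trans ht₀I.2⟩, hcon⟩) (not_le.2 hst)
    have hgeq : g t₀ = c t₀ := by
      refine le_antisymm ht₀A.2 ?_
      have h1 : Tendsto (fun s => g s - c s) (𝓝[<] t₀) (𝓝 (g t₀ - c t₀)) :=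
        ((hgc.sub hcc).tendsto t₀).mono_left nhdsWithin_le_nhds
      have hmem : Ioo (0:ℝ) t₀ ∈ 𝓝[<] t₀ :=
        Ioo_mem_nhdsLT ht₀pos
      have h2 : ∀ᶠ s in 𝓝[<] t₀, (0:ℝ) ≤ g s - c s := by
        filter_upwards [hmem] with s hs
        exact sub_nonneg.2 (hleft s hs.1.le hs.2).le
      have := ge_of_tendsto h1 h2
      linarith
    set θ := (κ + δ) * t₀ + ε with hθdef
    have hθ0 : 0 < θ := by
      have : 0 ≤ (κ + δ) * t₀ := mul_nonneg (by linarith) ht₀pos.le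
      linarith
    have hθπ : θ < π := by
      have : (κ + δ) * t₀ ≤ (κ + δ) * L :=
        mul_le_mul_of_nonneg_left ht₀I.2 (by linarith)
      linarith
    have hsinθ : Real.sin θ = Real.sqrt (1 - g t₀ ^ 2) := by
      rw [hgeq]
      have : Real.sin θ = Real.sqrt (1 - Real.cos θ ^ 2) :=
        Real.sin_eq_sqrt_one_sub_cos_sq hθ0.le hθπ.le
      simpa [hc] using this
    have hsinpos : 0 < Real.sin θ := Real.sin_pos_of_pos_of_lt_pi hθ0 hθπ
    have hcd : HasDerivAt c (-Real.sin θ * (κ + δ)) t₀ := by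
      have haff : HasDerivAt (fun t : ℝ => (κ + δ) * t + ε) (κ + δ) t₀ := by
        simpa using ((hasDerivAt_id t₀).const_mul (κ + δ)).add_const ε
      exact (Real.hasDerivAt_cos θ).comp t₀ haff
    set d := g' t₀ - -Real.sin θ * (κ + δ) with hddef
    have H : HasDerivAt (fun s => g s - c s) d t₀ := (hg t₀).sub hcd
    have hdpos : 0 < d := by
      have h1 := hd t₀
      rw [← hsinθ] at h1
      have : d ≥ -(κ * Real.sin θ) + Real.sin θ * (κ + δ) := by
        rw [hddef]; linarith
      nlinarith
    have hdnonpos : d ≤ 0 := by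
      have hslope := hasDerivAt_iff_tendsto_slope.1 H
      have hmono : 𝓝[<] t₀ ≤ 𝓝[≠] t₀ :=
        nhdsWithin_mono t₀ (fun s hs => ne_of_lt hs)
      refine le_of_tendsto (hslope.mono_left hmono) ?_
      have hmem : Ioo (0:ℝ) t₀ ∈ 𝓝[<] t₀ :=
        Ioo_mem_nhdsLT ht₀pos
      filter_upwards [hmem] with s hs
      rw [slope_def_field]
      have hnum : 0 ≤ (g s - c s) - (g t₀ - c t₀) := by
        rw [hgeq]; simp
        exact (hleft s hs.1.le hs.2).le
      exact div_nonpos_of_nonneg_of_nonpos hnum (by linarith [hs.2])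
    linarith
  have hcL : (-1:ℝ) < c L := by
    have h0 : 0 ≤ (κ + δ) * L + ε := by positivity
    have := Real.cos_lt_cos_of_nonneg_of_le_pi h0 le_rfl hπ
    simpa [hc] using this
  exact hcL.trans (key L ⟨hL, le_rfl⟩)

variable {E : Type*} [NormedAddCommGroup E] [InnerProductSpace ℝ E]

local notation "⟪" x ", " y "⟫" => @inner ℝ _ _ x y

lemma hasDerivAt_norm_of_ne {y y' : ℝ → E} (hy : ∀ t, HasDerivAt y (y' t) t)
    (hne : ∀ t, y t ≠ 0) (t : ℝ) :
    HasDerivAt (fun s => ‖y s‖) (⟪y t, y' t⟫ / ‖y t‖) t := by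
  have h1 : HasDerivAt (fun s => (⟪y s, y s⟫ : ℝ)) (2 * ⟪y t, y' t⟫) t := by
    have := (hy t).inner ℝ (hy t)
    convert this using 1
    all_goals try rfl
    rw [real_inner_comm]; ring
  have h2 : (⟪y t, y t⟫ : ℝ) ≠ 0 := inner_self_ne_zero.2 (hne t)
  have h3 := (Real.hasDerivAt_sqrt h2).comp t h1
  have h4 : ((fun x => Real.sqrt x) ∘ fun s => (⟪y s, y s⟫ : ℝ)) = fun s => ‖y s‖ := by
    funext s
    simp only [Function.comp_apply]
    rw [real_inner_self_eq_norm_mul_norm, Real.sqrt_mul_self (norm_nonneg _)]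
  rw [h4] at h3
  convert h3 using 1
  all_goals try rfl
  rw [real_inner_self_eq_norm_mul_norm, Real.sqrt_mul_self (norm_nonneg _)]
  have : ‖y t‖ ≠ 0 := norm_ne_zero_iff.2 (hne t)
  field_simp

lemma antiperiodic_false {y y' : ℝ → E} {κ L : ℝ}
    (hκ : 0 ≤ κ) (hL : 0 < L) (hπ : κ * L < π)
    (hy : ∀ t, HasDerivAt y (y' t) t)
    (hb : ∀ t, ‖y' t‖ ≤ κ * ‖y t‖)
    (hne : ∀ t, y t ≠ 0)
    (hanti : y L = -(y 0)) : False := by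
  set r : ℝ → ℝ := fun t => ‖y t‖ with hrdef
  have hrpos : ∀ t, 0 < r t := fun t => norm_pos_iff.2 (hne t)
  set e : E := (r 0)⁻¹ • y 0 with hedef
  have he1 : ‖e‖ = 1 := by
    rw [hedef, norm_smul, Real.norm_eq_abs, abs_inv, abs_of_pos (hrpos 0)]
    exact inv_mul_cancel₀ (hrpos 0).ne'
  set g : ℝ → ℝ := fun t => ⟪y t, e⟫ / r t with hgdef
  have hg1 : ∀ t, |g t| ≤ 1 := by
    intro t
    rw [hgdef]
    simp only [abs_div, abs_of_pos (hrpos t)]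
    rw [div_le_one (hrpos t)]
    calc |⟪y t, e⟫| ≤ ‖y t‖ * ‖e‖ := abs_real_inner_le_norm _ _
    _ = r t := by rw [he1, mul_one]
  have hy0e : (⟪y 0, e⟫ : ℝ) = r 0 := by
    rw [hedef, real_inner_smul_right, real_inner_self_eq_norm_mul_norm]
    rw [show ‖y 0‖ = r 0 from rfl]
    field_simp [(hrpos 0).ne']
  have hg0 : g 0 = 1 := by
    show (⟪y 0, e⟫ : ℝ) / r 0 = 1
    rw [hy0e]; exact div_self (hrpos 0).ne'
  have hrL : r L = r 0 := by show ‖y L‖ = ‖y 0‖; rw [hanti, norm_neg]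
  have hgL : g L = -1 := by
    show (⟪y L, e⟫ : ℝ) / r L = -1
    rw [show (⟪y L, e⟫ : ℝ) = -(r 0) from by rw [hanti, inner_neg_left, hy0e], hrL,
      neg_div, div_self (hrpos 0).ne']
  have hq : ∀ t, HasDerivAt (fun s => (⟪y s, e⟫ : ℝ)) ⟪y' t, e⟫ t := by
    intro t
    have := (hy t).inner ℝ (hasDerivAt_const t e)
    simpa using this
  have hr : ∀ t, HasDerivAt r (⟪y t, y' t⟫ / r t) t := hasDerivAt_norm_of_ne hy hne
  set G' : ℝ → ℝ := fun t =>
    (⟪y' t, e⟫ * r t - ⟪y t, e⟫ * (⟪y t, y' t⟫ / r t)) / r t ^ 2 with hG'def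
  have hGd : ∀ t, HasDerivAt g (G' t) t := fun t => (hq t).div (hr t) (hrpos t).ne'
  have hbound : ∀ t, |G' t| ≤ κ * Real.sqrt (1 - g t ^ 2) := by
    intro t
    have h1 : r t ≠ 0 := (hrpos t).ne'
    have hyte : (⟪y t, e⟫ : ℝ) = g t * r t := by
      rw [hgdef]; field_simp
    set w : E := e - (g t / r t) • y t with hwdef
    have hstep1 : G' t = ⟪y' t, w⟫ / r t := by
      have hC : (⟪y' t, y t⟫ : ℝ) = ⟪y t, y' t⟫ := real_inner_comm _ _
      rw [hG'def, hwdef]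
      simp only [inner_sub_right, real_inner_smul_right, hC]
      rw [hyte]
      field_simp
    have hns : ‖(g t / r t) • y t‖ ^ 2 = g t ^ 2 := by
      rw [norm_smul, Real.norm_eq_abs, mul_pow, sq_abs]
      rw [show ‖y t‖ = r t from rfl]
      field_simp
    have hey : (⟪e, (g t / r t) • y t⟫ : ℝ) = g t ^ 2 := by
      rw [real_inner_smul_right, real_inner_comm, hyte]
      field_simp
    have hstep2 : ‖w‖ ^ 2 = 1 - g t ^ 2 := by
      rw [hwdef, norm_sub_sq_real, hey, hns, he1]
      ring
    have hwnorm : ‖w‖ = Real.sqrt (1 - g t ^ 2) := by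
      rw [← hstep2, Real.sqrt_sq (norm_nonneg _)]
    rw [hstep1, abs_div, abs_of_pos (hrpos t), div_le_iff₀ (hrpos t)]
    calc |⟪y' t, w⟫| ≤ ‖y' t‖ * ‖w‖ := abs_real_inner_le_norm _ _
      _ ≤ κ * r t * ‖w‖ := mul_le_mul_of_nonneg_right (hb t) (norm_nonneg _)
      _ = κ * Real.sqrt (1 - g t ^ 2) * r t := by rw [hwnorm]; ring
  have hδ : 0 < (π - κ * L) / (2 * L) := div_pos (by linarith) (by linarith)
  have hε : 0 < (π - κ * L) / 4 := by linarith
  have happ := first_crossing hκ hδ hε hL.le ?hsum hGd hg1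
    (fun t => (abs_le.1 (hbound t)).1) hg0
  · rw [hgL] at happ; exact lt_irrefl _ happ
  case hsum =>
    have h1 : (κ + (π - κ * L) / (2 * L)) * L + (π - κ * L) / 4
        = κ * L + (π - κ * L) / 2 + (π - κ * L) / 4 := by
      field_simp
    rw [h1]; linarith

lemma vanish_forward {y y' : ℝ → E} {κ : ℝ}
    (hy : ∀ t, HasDerivAt y (y' t) t) (hb : ∀ t, ‖y' t‖ ≤ κ * ‖y t‖)
    {t₀ : ℝ} (h0 : y t₀ = 0) {t : ℝ} (ht : t₀ ≤ t) : y t = 0 := by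
  have hcont : ContinuousOn y (Icc t₀ t) :=
    (continuous_iff_continuousAt.2 fun s => (hy s).continuousAt).continuousOn
  have h := norm_le_gronwallBound_of_norm_deriv_right_le (f' := y') (δ := 0) (K := κ) (ε := 0)
    hcont (fun x _ => (hy x).hasDerivWithinAt) (by simp [h0])
    (fun x _ => by simpa using hb x)
  have := h t ⟨ht, le_rfl⟩
  rw [gronwallBound_ε0] at this
  simp only [zero_mul] at this
  exact norm_le_zero_iff.1 this

open scoped NNReal

lemma halve {F : E → E} {κ : ℝ≥0} (hF : LipschitzWith κ F)
    {X : ℝ → E} (hX : ∀ t, HasDerivAt X (F (X t)) t)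
    {S : ℝ} (hS : 0 < S) (hκS : (κ:ℝ) * S < 2 * π)
    (hper : ∀ t, X (t + S) = X t) : ∀ t, X (t + S / 2) = X t := by
  set y : ℝ → E := fun t => X (t + S/2) - X t with hydef
  set y' : ℝ → E := fun t => F (X (t + S/2)) - F (X t) with hy'def
  have hyd : ∀ t, HasDerivAt y (y' t) t := by
    intro t
    have h1 : HasDerivAt (fun s => X (s + S/2)) (F (X (t + S/2))) t :=
      HasDerivAt.comp_add_const t (S/2) (hX (t + S/2))
    exact h1.sub (hX t)
  have hbnd : ∀ t, ‖y' t‖ ≤ (κ:ℝ) * ‖y t‖ := by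
    intro t
    have := hF.dist_le_mul (X (t + S/2)) (X t)
    simpa [hy'def, hydef, dist_eq_norm] using this
  have hyper : ∀ t, y (t + S) = y t := by
    intro t
    simp only [hydef]
    rw [show t + S + S/2 = (t + S/2) + S by ring, hper, hper]
  have hanti : y (S/2) = -(y 0) := by
    simp only [hydef, zero_add]
    rw [show S/2 + S/2 = 0 + S by ring, hper]
    abel
  intro t
  by_cases hv : ∃ t₀, y t₀ = 0
  · obtain ⟨t₀, h0⟩ := hv
    have hyall : y t = 0 := by
      have hyn : ∀ m : ℕ, y (t + m * S) = y t := by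
        intro m
        induction m with
        | zero => simp
        | succ k ih =>
            rw [show t + ((k:ℕ)+1 : ℕ) * S = (t + k * S) + S by push_cast; ring, hyper, ih]
      obtain ⟨n, hn⟩ : ∃ n : ℕ, t₀ ≤ t + n * S := by
        obtain ⟨n, hn⟩ := Archimedean.arch (t₀ - t) hS
        refine ⟨n, ?_⟩
        rw [nsmul_eq_mul] at hn
        linarith
      rw [← hyn n]
      exact vanish_forward hyd hbnd h0 hn
    rw [hydef] at hyall
    exact sub_eq_zero.1 hyall
  · push_neg at hv
    exact absurd hanti.symm (by
      intro h
      exact antiperiodic_false (κ := (κ:ℝ)) (L := S/2) κ.coe_nonneg (by linarith)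
        (by linarith) hyd hbnd hv h.symm)

/-- **Yorke's theorem.** If `F : ℝ^N → ℝ^N` is Lipschitz with constant
`κ > 0` and `X : ℝ → ℝ^N` is a nonconstant periodic solution of `X' = F ∘ X` with period
`T > 0`, then `T ≥ 2π/κ`. -/
theorem yorke_period_lower_bound
    {N : ℕ} (F : EuclideanSpace ℝ (Fin N) → EuclideanSpace ℝ (Fin N))
    (κ : ℝ≥0) (hκ : 0 < κ) (hF : LipschitzWith κ F)
    (X : ℝ → EuclideanSpace ℝ (Fin N))
    (hX : ∀ t, HasDerivAt X (F (X t)) t)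
    (T : ℝ) (hT : 0 < T)
    (hper : ∀ t, X (t + T) = X t)
    (hnonconst : ∃ t s : ℝ, X t ≠ X s) :
    2 * Real.pi / κ ≤ T := by
  by_contra hcon
  push_neg at hcon
  have hκ0 : (0:ℝ) < κ := by exact_mod_cast hκ
  have hκT : (κ:ℝ) * T < 2 * π := by
    have := (lt_div_iff₀ hκ0).1 hcon
    linarith
  have hper2 : ∀ n : ℕ, ∀ t, X (t + T / 2^n) = X t := by
    intro n
    induction n with
    | zero => simpa using hper
    | succ m ih =>
        have hS : 0 < T / 2^m := by positivity
        have hle : T / 2^m ≤ T := div_le_self hT.le (one_le_pow₀ (by norm_num : (1:ℝ) ≤ 2))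
        have hκS : (κ:ℝ) * (T / 2^m) < 2 * π :=
          lt_of_le_of_lt (mul_le_mul_of_nonneg_left hle κ.coe_nonneg) hκT
        have h := halve hF hX hS hκS ih
        intro t
        rw [show T / 2^(m+1) = (T / 2^m) / 2 by rw [pow_succ]; ring]
        exact h t
  have hXc : Continuous X := continuous_iff_continuousAt.2 fun u => (hX u).continuousAt
  have hconst : ∀ t s, X t = X s := by
    intro t s
    have hint : ∀ n : ℕ, ∀ k : ℤ, X (t + k * (T / 2^n)) = X t := by
      intro n k
      have hp : Function.Periodic X (T / 2^n) := fun u => hper2 n u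
      exact (hp.int_mul k) t
    set u : ℕ → ℝ := fun n => t + ⌊(s - t) / (T / 2^n)⌋ * (T / 2^n) with hu
    have hXu : ∀ n, X (u n) = X t := fun n => hint n _
    have hbound : ∀ n, dist (u n) s ≤ T / 2^n := by
      intro n
      have hSpos : 0 < T / 2^n := by positivity
      have h1 : (⌊(s - t)/(T/2^n)⌋ : ℝ) * (T/2^n) ≤ s - t := by
        rw [← le_div_iff₀ hSpos]
        exact Int.floor_le _
      have h2 : s - t < ((⌊(s - t)/(T/2^n)⌋ : ℝ) + 1) * (T/2^n) := by
        rw [← div_lt_iff₀ hSpos]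
        have := Int.lt_floor_add_one ((s - t)/(T/2^n))
        push_cast at this ⊢
        exact this
      simp only [hu]
      rw [Real.dist_eq, abs_le]
      constructor
      · nlinarith
      · nlinarith
    have h0 : Tendsto (fun n : ℕ => T / 2^n) atTop (𝓝 0) := by
      have h := (tendsto_pow_atTop_nhds_zero_of_lt_one (by norm_num : (0:ℝ) ≤ 1/2)
        (by norm_num : (1/2:ℝ) < 1)).const_mul T
      simp only [mul_zero] at h
      have heq : (fun n : ℕ => T / 2^n) = fun n : ℕ => T * (1/2)^n := by
        funext n; rw [div_pow, one_pow]; ring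
      rw [heq]; exact h
    have hlim : Tendsto u atTop (𝓝 s) := by
      rw [tendsto_iff_dist_tendsto_zero]
      exact squeeze_zero (fun n => dist_nonneg) hbound h0
    have h1 : Tendsto (fun n => X (u n)) atTop (𝓝 (X s)) := (hXc.tendsto s).comp hlim
    have h2 : Tendsto (fun n => X (u n)) atTop (𝓝 (X t)) := by
      simp only [hXu]; exact tendsto_const_nhds
    exact (tendsto_nhds_unique h2 h1)
  obtain ⟨a, b, hab⟩ := hnonconst
  exact hab (hconst a b)
end
end

section
/- Let (Σ, μ) be a measure space, let 0 < c ≤ T < ∞, let 𝔭 : Σ → [c, T] be measurable and let ϑ : Σ → ℝ be measurable and essentially bounded. For λ ∈ ℂ set M_λ(x) = exp(−𝔭(x)(λ − ϑ(x))), and for k ∈ ℤ set F_k(x) = ϑ(x) + i·2kπ/𝔭(x). Then 1 belongs to the essential range of M_λ if and only if λ belongs to the closure of ⋃_{k∈ℤ} R_ess(F_k), where R_ess(F_k) denotes the essential range of F_k. -/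
open MeasureTheory
open scoped ENNReal

noncomputable section

/-- The essential range of a measurable function with values in a metric space:
the set of points `z` such that every neighbourhood of `z` is hit by the function on a set
of positive measure. -/
def essRange {α E : Type*} [MeasurableSpace α] [PseudoMetricSpace E]
    (μ : Measure α) (g : α → E) : Set E :=
  {z | ∀ ε > 0, 0 < μ {x | dist (g x) z < ε}}

lemma essRange_step {α : Type*} [MeasurableSpace α] (μ : Measure α) (g : α → ℂ)
    (z : ℂ) (r : ℝ) (hr : 0 < r) (h : 0 < μ {x | dist (g x) z < r}) :
    ∃ z', dist z' z ≤ r ∧ 0 < μ {x | dist (g x) z' < r / 2} := by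
  by_contra hcon
  push_neg at hcon
  set u : ℕ → ℂ := TopologicalSpace.denseSeq ℂ with hu
  have hdense : DenseRange u := TopologicalSpace.denseRange_denseSeq ℂ
  have hcover : {x | dist (g x) z < r} ⊆
      ⋃ n : ℕ, {x | dist (u n) z ≤ r ∧ dist (g x) (u n) < r / 2} := by
    intro x hx
    simp only [Set.mem_setOf_eq] at hx
    have hδ : 0 < min (r / 2) (r - dist (g x) z) := by
      apply lt_min (by linarith) (by linarith)
    obtain ⟨n, hn⟩ := (Metric.denseRange_iff.mp hdense) (g x) _ hδ
    refine Set.mem_iUnion.mpr ⟨n, ?_, ?_⟩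
    · have h1 : dist (g x) (u n) < r - dist (g x) z := lt_of_lt_of_le hn (min_le_right _ _)
      calc dist (u n) z ≤ dist (u n) (g x) + dist (g x) z := dist_triangle _ _ _
        _ ≤ r := by rw [dist_comm]; linarith
    · exact lt_of_lt_of_le hn (min_le_left _ _)
  have hnull : μ (⋃ n : ℕ, {x | dist (u n) z ≤ r ∧ dist (g x) (u n) < r / 2}) = 0 := by
    refine measure_iUnion_null fun n => ?_
    by_cases hn : dist (u n) z ≤ r
    · have hle : {x : α | dist (u n) z ≤ r ∧ dist (g x) (u n) < r / 2} ⊆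
          {x | dist (g x) (u n) < r / 2} := fun x hx => hx.2
      have := hcon (u n) hn
      exact le_antisymm (le_trans (measure_mono hle) (le_of_not_gt (fun hh => absurd hh this.not_gt.elim))) (zero_le)
    · have : {x : α | dist (u n) z ≤ r ∧ dist (g x) (u n) < r / 2} = ∅ := by
        ext x; simp [hn]
      simp [this]
  exact absurd (le_trans (measure_mono hcover) hnull.le) h.not_ge

lemma exists_essRange_near {α : Type*} [MeasurableSpace α] (μ : Measure α) (g : α → ℂ)
    (z : ℂ) (ε : ℝ) (hε : 0 < ε) (h : 0 < μ {x | dist (g x) z < ε}) :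
    ∃ w ∈ essRange μ g, dist w z ≤ 3 * ε := by
  classical
  have key : ∀ (n : ℕ) (z' : ℂ), 0 < μ {x | dist (g x) z' < ε / 2 ^ n} →
      ∃ z'', dist z'' z' ≤ ε / 2 ^ n ∧ 0 < μ {x | dist (g x) z'' < ε / 2 ^ (n + 1)} := by
    intro n z' hz'
    obtain ⟨z'', h1, h2⟩ := essRange_step μ g z' (ε / 2 ^ n) (by positivity) hz'
    refine ⟨z'', h1, ?_⟩
    have : ε / 2 ^ n / 2 = ε / 2 ^ (n + 1) := by ring
    rwa [this] at h2
  choose f hf1 hf2 using key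
  -- build the sequence
  let seq : ℕ → ℂ := fun n => Nat.rec z
    (fun n zn => if h : 0 < μ {x | dist (g x) zn < ε / 2 ^ n} then f n zn h else zn) n
  have hseq0 : seq 0 = z := rfl
  have hpos : ∀ n, 0 < μ {x | dist (g x) (seq n) < ε / 2 ^ n} := by
    intro n
    induction n with
    | zero => simpa [hseq0] using h
    | succ n ih =>
      have : seq (n + 1) = f n (seq n) ih := by
        show (if h : _ then f n (seq n) h else seq n) = _
        rw [dif_pos ih]
      rw [this]
      exact hf2 n (seq n) ih
  have hstep : ∀ n, dist (seq (n + 1)) (seq n) ≤ ε / 2 ^ n := by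
    intro n
    have : seq (n + 1) = f n (seq n) (hpos n) := by
      show (if h : _ then f n (seq n) h else seq n) = _
      rw [dif_pos (hpos n)]
    rw [this]
    exact hf1 n (seq n) (hpos n)
  have hcauchy : CauchySeq seq := by
    apply cauchySeq_of_le_geometric (1 / 2) ε (by norm_num)
    intro n
    rw [dist_comm]
    calc dist (seq (n + 1)) (seq n) ≤ ε / 2 ^ n := hstep n
      _ = ε * (1 / 2) ^ n := by rw [div_pow, one_pow]; ring
  obtain ⟨w, hw⟩ := cauchySeq_tendsto_of_complete hcauchy
  have hdistn : ∀ n, dist (seq n) z ≤ 2 * ε := by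
    intro n
    have key2 : ∀ n, dist (seq n) z ≤ 2 * ε - 2 * (ε / 2 ^ n) := by
      intro n
      induction n with
      | zero => simp [hseq0]
      | succ n ih =>
        calc dist (seq (n + 1)) z ≤ dist (seq (n + 1)) (seq n) + dist (seq n) z :=
              dist_triangle _ _ _
          _ ≤ ε / 2 ^ n + (2 * ε - 2 * (ε / 2 ^ n)) := add_le_add (hstep n) ih
          _ = 2 * ε - 2 * (ε / 2 ^ (n + 1)) := by rw [pow_succ]; ring
    calc dist (seq n) z ≤ 2 * ε - 2 * (ε / 2 ^ n) := key2 n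
      _ ≤ 2 * ε := by
        have h0 : 0 < ε / 2 ^ n := by positivity
        linarith
  have hwz : dist w z ≤ 2 * ε :=
    le_of_tendsto (Filter.Tendsto.dist hw tendsto_const_nhds) (Filter.Eventually.of_forall hdistn)
  refine ⟨w, ?_, by linarith⟩
  intro s hs
  -- choose n with dist (seq n) w < s/2 and ε / 2^n < s/2
  have h1 : Filter.Tendsto (fun n => dist (seq n) w) Filter.atTop (nhds 0) :=
    tendsto_iff_dist_tendsto_zero.mp hw
  have h2 : Filter.Tendsto (fun n : ℕ => ε / 2 ^ n) Filter.atTop (nhds 0) := by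
    simpa using Filter.Tendsto.const_mul ε (tendsto_pow_atTop_nhds_zero_of_lt_one
      (by norm_num : (0:ℝ) ≤ 1/2) (by norm_num : (1:ℝ)/2 < 1)) |>.congr (by
        intro n; rw [div_pow, one_pow]; ring)
  have hev : ∀ᶠ n in Filter.atTop, dist (seq n) w < s / 2 ∧ ε / 2 ^ n < s / 2 := by
    filter_upwards [h1.eventually (gt_mem_nhds (by linarith : (0:ℝ) < s/2)),
      h2.eventually (gt_mem_nhds (by linarith : (0:ℝ) < s/2))] with n hn1 hn2
    exact ⟨hn1, hn2⟩
  obtain ⟨n, hn1, hn2⟩ := hev.exists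
  refine lt_of_lt_of_le (hpos n) (measure_mono ?_)
  intro x hx
  simp only [Set.mem_setOf_eq] at hx ⊢
  calc dist (g x) w ≤ dist (g x) (seq n) + dist (seq n) w := dist_triangle _ _ _
    _ < ε / 2 ^ n + s / 2 := add_lt_add hx hn1
    _ < s / 2 + s / 2 := by linarith
    _ = s := by ring
set_option maxHeartbeats 1000000 in
open Real in
lemma exp_near_one (w : ℂ) (δ : ℝ) (hδ0 : 0 < δ) (hδ : δ ≤ 1 / 2)
    (h : ‖Complex.exp w - 1‖ < δ) :
    ∃ k : ℤ, ‖w - 2 * π * k * Complex.I‖ < 9 * δ := by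
  set a := w.re with ha'
  set b := w.im with hb'
  have hexpa : |Real.exp a - 1| < δ := by
    have h1 : |‖Complex.exp w‖ - ‖(1:ℂ)‖| ≤ ‖Complex.exp w - 1‖ := abs_norm_sub_norm_le _ _
    rw [norm_one, Complex.norm_exp] at h1
    exact lt_of_le_of_lt h1 (by exact h)
  have hea1 : Real.exp a > 1 - δ := by linarith [(abs_lt.mp hexpa).1]
  have hea2 : Real.exp a < 1 + δ := by linarith [(abs_lt.mp hexpa).2]
  have heapos : (0:ℝ) < Real.exp a := Real.exp_pos a
  set E := Real.exp (-a) with hE'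
  have hEpos : (0:ℝ) < E := Real.exp_pos _
  have hprod : Real.exp a * E = 1 := by
    rw [hE', ← Real.exp_add]; simp
  have hE2 : E < 2 := by nlinarith
  have hE1 : |E - 1| ≤ 2 * δ := by
    rw [abs_le]; constructor <;> nlinarith
  -- bound |a|
  have haub : a < 2 * δ := by
    have := Real.add_one_le_exp a; linarith [(abs_lt.mp hexpa).2]
  have halb : -a < 2 * δ := by
    have := Real.add_one_le_exp (-a); nlinarith
  have habs : |a| < 2 * δ := abs_lt.mpr ⟨by linarith, haub⟩
  -- bound |exp(bI) - 1|
  have hwsplit : w = (a : ℂ) + b * Complex.I := (Complex.re_add_im w).symm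
  have hkey : Complex.exp ((b:ℂ) * Complex.I) - 1
      = (Complex.exp w - 1) * (E : ℂ) + ((E : ℂ) - 1) := by
    have h1 : Complex.exp w * (E : ℂ) = Complex.exp ((b:ℂ) * Complex.I) := by
      rw [hE', Complex.ofReal_exp, ← Complex.exp_add]
      congr 1
      rw [hwsplit]; push_cast; ring
    rw [← h1]; ring
  have hBI : ‖Complex.exp ((b:ℂ) * Complex.I) - 1‖ < 4 * δ := by
    rw [hkey]
    calc ‖(Complex.exp w - 1) * (E : ℂ) + ((E : ℂ) - 1)‖
        ≤ ‖(Complex.exp w - 1) * (E : ℂ)‖ + ‖(E : ℂ) - 1‖ :=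
          norm_add_le _ _
      _ = ‖Complex.exp w - 1‖ * E + |E - 1| := by
          rw [norm_mul, Complex.norm_real, Real.norm_eq_abs, abs_of_pos hEpos]
          congr 1
          rw [← Complex.ofReal_one, ← Complex.ofReal_sub, Complex.norm_real, Real.norm_eq_abs]
      _ < δ * 2 + 2 * δ := by
          apply add_lt_add_of_lt_of_le _ hE1
          apply mul_lt_mul' (le_of_lt h) hE2 hEpos.le hδ0
      _ = 4 * δ := by ring
  -- |exp(bI) - 1|^2 = 2 - 2 cos b
  have hsq : ‖Complex.exp ((b:ℂ) * Complex.I) - 1‖ ^ 2 = 2 - 2 * Real.cos b := by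
    rw [Complex.sq_norm, Complex.normSq_apply, Complex.sub_re, Complex.sub_im,
      Complex.exp_ofReal_mul_I_re, Complex.exp_ofReal_mul_I_im, Complex.one_re, Complex.one_im]
    nlinarith [Real.sin_sq_add_cos_sq b]
  -- the integer
  set k : ℤ := round (b / (2 * π)) with hk'
  set r : ℝ := b - 2 * π * k with hr'
  have h2pi : (0:ℝ) < 2 * π := by positivity
  have hrval : r = (b / (2 * π) - k) * (2 * π) := by
    rw [hr']; field_simp
  have hrpi : |r| ≤ π := by
    rw [hrval, abs_mul, abs_of_pos h2pi]
    calc |b / (2 * π) - ↑k| * (2 * π) ≤ 1 / 2 * (2 * π) := by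
          exact mul_le_mul_of_nonneg_right (abs_sub_round _) h2pi.le
      _ = π := by ring
  have hcosbr : Real.cos b = Real.cos r := by
    rw [hr']
    have := Real.cos_add_int_mul_two_pi r k
    rw [show r + k * (2 * π) = b - 2 * π * k + k * (2 * π) from rfl] at this
    rw [← this]; ring_nf
  -- Jordan-type bound
  have hjordan : Real.cos r ≤ 1 - 2 / π ^ 2 * r ^ 2 := Real.cos_le_one_sub_mul_cos_sq hrpi
  have hrsq : r ^ 2 < (2 * π * δ) ^ 2 := by
    have h1 : 2 - 2 * Real.cos b < (4 * δ) ^ 2 := by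
      rw [← hsq]
      have := norm_nonneg (Complex.exp ((b:ℂ) * Complex.I) - 1)
      nlinarith
    have hpi2 : (0:ℝ) < π ^ 2 := by positivity
    rw [hcosbr] at h1
    have h3 : 2 / π ^ 2 * r ^ 2 < 8 * δ ^ 2 := by nlinarith
    have h4 : 2 * r ^ 2 < 8 * δ ^ 2 * π ^ 2 := by
      have h5 := mul_lt_mul_of_pos_right h3 hpi2
      have h6 : 2 / π ^ 2 * r ^ 2 * π ^ 2 = 2 * r ^ 2 := by field_simp
      linarith [h6 ▸ h5]
    have h7 : (2 * π * δ) ^ 2 = 8 * δ ^ 2 * π ^ 2 / 2 := by ring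
    linarith
  have hrlt : |r| < 2 * π * δ := abs_lt_of_sq_lt_sq hrsq (by positivity)
  -- conclude
  refine ⟨k, ?_⟩
  have hre : (w - 2 * ↑π * ↑k * Complex.I).re = a := by simp [ha']
  have him : (w - 2 * ↑π * ↑k * Complex.I).im = r := by
    simp [hr', hb']
  calc ‖w - 2 * ↑π * ↑k * Complex.I‖
      ≤ |(w - 2 * ↑π * ↑k * Complex.I).re| + |(w - 2 * ↑π * ↑k * Complex.I).im| :=
        Complex.norm_le_abs_re_add_abs_im _
    _ = |a| + |r| := by rw [hre, him]
    _ < 2 * δ + 2 * π * δ := add_lt_add habs hrlt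
    _ < 9 * δ := by nlinarith [Real.pi_lt_d2]
/-- Let `(Σ, μ)` be a measure space, `0 < c ≤ T < ∞`, `𝔭 : Σ → [c,T]`
measurable and `ϑ : Σ → ℝ` measurable and essentially bounded.  For `λ ∈ ℂ` set
`M_λ(x) = exp(−𝔭(x)(λ − ϑ(x)))` and, for `k ∈ ℤ`, `F_k(x) = ϑ(x) + 2ikπ/𝔭(x)`.  Then
`1 ∈ R_ess(M_λ)` if and only if `λ ∈ closure (⋃ k, R_ess(F_k))`. -/
theorem one_in_essRange_iff
    {S : Type*} [MeasurableSpace S] (μ : Measure S)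
    (c T : ℝ) (hc : 0 < c) (hcT : c ≤ T)
    (𝔭 : S → ℝ) (h𝔭meas : Measurable 𝔭) (h𝔭 : ∀ x, 𝔭 x ∈ Set.Icc c T)
    (ϑ : S → ℝ) (hϑmeas : Measurable ϑ) (hϑbdd : ∃ C, ∀ᵐ x ∂μ, |ϑ x| ≤ C)
    (lam : ℂ) :
    (1 : ℂ) ∈ essRange μ (fun x => Complex.exp (-(𝔭 x : ℂ) * (lam - (ϑ x : ℂ)))) ↔
      lam ∈ closure (⋃ k : ℤ,
        essRange μ (fun x => (ϑ x : ℂ) + Complex.I * (2 * (k : ℂ) * (Real.pi : ℂ) / (𝔭 x : ℂ)))) := by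
  set π := Real.pi with hπ
  set F : ℤ → S → ℂ := fun k x => (ϑ x : ℂ) + Complex.I * (2 * (k : ℂ) * (π : ℂ) / (𝔭 x : ℂ))
    with hF
  set M : S → ℂ := fun x => Complex.exp (-(𝔭 x : ℂ) * (lam - (ϑ x : ℂ))) with hM
  have hpc : ∀ x, c ≤ 𝔭 x := fun x => (h𝔭 x).1
  have hpT : ∀ x, 𝔭 x ≤ T := fun x => (h𝔭 x).2
  have hppos : ∀ x, 0 < 𝔭 x := fun x => lt_of_lt_of_le hc (hpc x)
  have hpne : ∀ x, (𝔭 x : ℂ) ≠ 0 := fun x => by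
    exact_mod_cast (ne_of_gt (hppos x) : (𝔭 x : ℝ) ≠ 0)
  have hTpos : 0 < T := lt_of_lt_of_le hc hcT
  -- key algebraic identity
  have hco : ∀ (k : ℤ) (x : S),
      -(𝔭 x : ℂ) * (lam - (ϑ x : ℂ)) =
        -(𝔭 x : ℂ) * (lam - F k x) + (-k : ℤ) * (2 * (π : ℂ) * Complex.I) := by
    intro k x
    rw [hF]
    push_cast
    field_simp [hpne x]
    ring
  have hMid : ∀ (k : ℤ) (x : S), M x = Complex.exp (-(𝔭 x : ℂ) * (lam - F k x)) := by
    intro k x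
    rw [hM]
    simp only
    rw [hco k x, Complex.exp_add, Complex.exp_int_mul_two_pi_mul_I, mul_one]
  constructor
  · -- forward direction
    intro hone
    rw [Metric.mem_closure_iff]
    intro ε hε
    set δ := min (1 / 2) (c * ε / 36) with hδ
    have hδ0 : 0 < δ := lt_min (by norm_num) (by positivity)
    have hδhalf : δ ≤ 1 / 2 := min_le_left _ _
    have hδc : 9 * δ ≤ c * ε / 4 := by
      have := min_le_right ((1:ℝ)/2) (c * ε / 36)
      calc 9 * δ ≤ 9 * (c * ε / 36) := by nlinarith
        _ = c * ε / 4 := by ring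
    have hpos := hone δ hδ0
    have hcover : {x | dist (M x) 1 < δ} ⊆ ⋃ k : ℤ, {x | dist (F k x) lam < ε / 4} := by
      intro x hx
      simp only [Set.mem_setOf_eq] at hx
      rw [Complex.dist_eq] at hx
      obtain ⟨k', hk'⟩ := exp_near_one (-(𝔭 x : ℂ) * (lam - (ϑ x : ℂ))) δ hδ0 hδhalf hx
      refine Set.mem_iUnion.mpr ⟨-k', ?_⟩
      simp only [Set.mem_setOf_eq]
      have heq : -(𝔭 x : ℂ) * (lam - F (-k') x) =
          -(𝔭 x : ℂ) * (lam - (ϑ x : ℂ)) - 2 * (π : ℂ) * (k' : ℂ) * Complex.I := by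
        rw [hF]
        push_cast
        field_simp [hpne x]
        ring
      have habs1 : ‖(𝔭 x : ℂ) * (lam - F (-k') x)‖ < 9 * δ := by
        have h3 : ‖-(𝔭 x : ℂ) * (lam - F (-k') x)‖ < 9 * δ := by
          rw [heq]; exact hk'
        rwa [neg_mul, norm_neg] at h3
      rw [Complex.dist_eq]
      have h4 : 𝔭 x * ‖F (-k') x - lam‖ < 𝔭 x * (ε / 4) := by
        have he : 𝔭 x * ‖F (-k') x - lam‖
            = ‖(𝔭 x : ℂ) * (lam - F (-k') x)‖ := by
          rw [norm_mul, Complex.norm_real, Real.norm_eq_abs, abs_of_pos (hppos x), norm_sub_rev]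
        rw [he]
        calc ‖(𝔭 x : ℂ) * (lam - F (-k') x)‖ < 9 * δ := habs1
          _ ≤ c * ε / 4 := hδc
          _ ≤ 𝔭 x * (ε / 4) := by nlinarith [hpc x]
      exact lt_of_mul_lt_mul_left h4 (hppos x).le
    have hne : μ (⋃ k : ℤ, {x | dist (F k x) lam < ε / 4}) ≠ 0 := by
      intro h0
      exact absurd (le_trans (measure_mono hcover) h0.le) hpos.not_ge
    obtain ⟨k, hk⟩ := exists_measure_pos_of_not_measure_iUnion_null hne
    obtain ⟨w, hw1, hw2⟩ := exists_essRange_near μ (F k) lam (ε / 4) (by positivity) hk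
    refine ⟨w, Set.mem_iUnion.mpr ⟨k, hw1⟩, ?_⟩
    rw [dist_comm]
    calc dist w lam ≤ 3 * (ε / 4) := hw2
      _ < ε := by linarith
  · -- reverse direction
    intro hcl
    intro ε hε
    set η := min 1 ε / (4 * T) with hη
    have hη0 : 0 < η := by
      apply div_pos (lt_min one_pos hε) (by positivity)
    obtain ⟨p, hp, hdp⟩ := Metric.mem_closure_iff.mp hcl (η / 2) (by positivity)
    obtain ⟨k, hk⟩ := Set.mem_iUnion.mp hp
    have hppos' := hk (η / 2) (by positivity)
    refine lt_of_lt_of_le hppos' (measure_mono ?_)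
    intro x hx
    simp only [Set.mem_setOf_eq] at hx ⊢
    have hdF : dist (F k x) lam < η := by
      calc dist (F k x) lam ≤ dist (F k x) p + dist p lam := dist_triangle _ _ _
        _ < η / 2 + η / 2 := add_lt_add hx (by rwa [dist_comm] at hdp)
        _ = η := by ring
    set w := -(𝔭 x : ℂ) * (lam - F k x) with hw
    have habsw : ‖w‖ ≤ min 1 ε / 4 := by
      rw [hw, neg_mul, norm_neg, norm_mul, Complex.norm_real, Real.norm_eq_abs, abs_of_pos (hppos x)]
      have h1 : ‖lam - F k x‖ < η := by
        rw [← Complex.dist_eq, dist_comm]; exact hdF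
      calc 𝔭 x * ‖lam - F k x‖ ≤ T * η := by
            apply mul_le_mul (hpT x) h1.le (norm_nonneg _) hTpos.le
        _ = min 1 ε / 4 := by
            rw [hη]
            field_simp [hTpos.ne']
    have hw1 : ‖w‖ ≤ 1 := by
      have : min (1:ℝ) ε ≤ 1 := min_le_left _ _
      linarith
    have hmin : 0 < min 1 ε := lt_min one_pos hε
    rw [Complex.dist_eq, hMid k x]
    calc ‖Complex.exp (-(𝔭 x : ℂ) * (lam - F k x)) - 1‖
        ≤ 2 * ‖w‖ := Complex.norm_exp_sub_one_le hw1
      _ ≤ 2 * (min 1 ε / 4) := by linarith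
      _ < ε := by
          have : min (1:ℝ) ε ≤ ε := min_le_right _ _
          linarith
end
end
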